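/- arXiv:2605.20107 — 6 statements merged into one kernel-verified Lean document; each statement's English description precedes it below -/
import Mathlib

section
/- Let d ≥ 1, let H be a d×d real symmetric positive definite matrix and c > 0. Then: (i) the matrix Σ* := (c/d)·H⁻¹ is positive semidefinite and satisfies tr(HΣ*) = c and V_H(Σ*) = c/d; (ii) every d×d real symmetric positive semidefinite matrix Σ with tr(HΣ) = c satisfies V_H(Σ) ≥ c/d; and (iii) if such a Σ satisfies V_H(Σ) = c/d then Σ = (c/d)·H⁻¹. -/
open Matrix

/-- `V_H(Σ) = sup { wᵀΣw : wᵀH⁻¹w ≤ 1 }`. -/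
noncomputable def VH {d : ℕ} (H S : Matrix (Fin d) (Fin d) ℝ) : ℝ :=
  sSup {r : ℝ | ∃ w : Fin d → ℝ, w ⬝ᵥ (H⁻¹ *ᵥ w) ≤ 1 ∧ r = w ⬝ᵥ (S *ᵥ w)}

lemma conj_quad {d : ℕ} (B S : Matrix (Fin d) (Fin d) ℝ) (v : Fin d → ℝ) :
    (B *ᵥ v) ⬝ᵥ (S *ᵥ (B *ᵥ v)) = v ⬝ᵥ ((Bᵀ * S * B) *ᵥ v) := by
  rw [mulVec_mulVec, Matrix.dotProduct_mulVec, Matrix.dotProduct_mulVec,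
    ← vecMul_transpose, vecMul_vecMul, Matrix.mul_assoc]

lemma spec {d : ℕ} (hd : 1 ≤ d) (M : Matrix (Fin d) (Fin d) ℝ) (hM : M.PosSemidef) :
    ∃ t : ℝ, 0 ≤ t ∧
      (∀ v : Fin d → ℝ, v ⬝ᵥ (M *ᵥ v) ≤ t * (v ⬝ᵥ v)) ∧
      (∃ v : Fin d → ℝ, v ⬝ᵥ v = 1 ∧ v ⬝ᵥ (M *ᵥ v) = t) ∧
      M.trace ≤ d * t ∧
      (M.trace = d * t → M = t • 1) := by
  haveI : NeZero d := ⟨by omega⟩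
  have hherm : M.IsHermitian := hM.1
  obtain ⟨i₀, -, hmax⟩ := Finset.exists_max_image Finset.univ hherm.eigenvalues
    Finset.univ_nonempty
  set t := hherm.eigenvalues i₀ with ht
  have hUnit : (hherm.eigenvectorUnitary : Matrix (Fin d) (Fin d) ℝ) *
      star (hherm.eigenvectorUnitary : Matrix (Fin d) (Fin d) ℝ) = 1 :=
    (Matrix.mem_unitaryGroup_iff).mp hherm.eigenvectorUnitary.2
  have hUnit' : star (hherm.eigenvectorUnitary : Matrix (Fin d) (Fin d) ℝ) *
      (hherm.eigenvectorUnitary : Matrix (Fin d) (Fin d) ℝ) = 1 :=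
    (Matrix.mem_unitaryGroup_iff').mp hherm.eigenvectorUnitary.2
  have hdiag : (RCLike.ofReal ∘ hherm.eigenvalues : Fin d → ℝ) = hherm.eigenvalues := by
    funext i; simp
  have hspec : M = (hherm.eigenvectorUnitary : Matrix (Fin d) (Fin d) ℝ) *
      diagonal hherm.eigenvalues * star (hherm.eigenvectorUnitary : Matrix (Fin d) (Fin d) ℝ) := by
    conv_lhs => rw [hherm.spectral_theorem]
    rw [hdiag, Unitary.conjStarAlgAut_apply]
  have hconst : (diagonal (fun _ : Fin d => t)) = t • (1 : Matrix (Fin d) (Fin d) ℝ) := by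
    ext i j
    by_cases h : i = j <;> simp [diagonal, Matrix.one_apply, h]
  have htr : M.trace = ∑ i, hherm.eigenvalues i := by
    conv_lhs => rw [hspec]
    rw [trace_mul_cycle, hUnit', Matrix.one_mul, trace_diagonal]
  have hpsd : (t • (1 : Matrix (Fin d) (Fin d) ℝ) - M).PosSemidef := by
    have hsub : diagonal (fun i => t - hherm.eigenvalues i) =
        t • (1 : Matrix (Fin d) (Fin d) ℝ) - diagonal hherm.eigenvalues := by
      rw [← hconst, diagonal_sub]
    have h1 : t • (1 : Matrix (Fin d) (Fin d) ℝ) - M =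
        (hherm.eigenvectorUnitary : Matrix (Fin d) (Fin d) ℝ) *
          diagonal (fun i => t - hherm.eigenvalues i) *
          (hherm.eigenvectorUnitary : Matrix (Fin d) (Fin d) ℝ)ᴴ := by
      rw [← Matrix.star_eq_conjTranspose, hsub, Matrix.mul_sub, Matrix.sub_mul,
        Matrix.mul_smul, Matrix.smul_mul, Matrix.mul_one, hUnit, ← hspec]
    rw [h1]
    exact (posSemidef_diagonal_iff.mpr fun i =>
      sub_nonneg.2 (hmax i (Finset.mem_univ i))).mul_mul_conjTranspose_same _
  refine ⟨t, hM.eigenvalues_nonneg i₀, ?_, ?_, ?_, ?_⟩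
  · intro v
    have h := hpsd.dotProduct_mulVec_nonneg v
    simp only [star_trivial, Matrix.sub_mulVec, dotProduct_sub, smul_mulVec,
      Matrix.one_mulVec, dotProduct_smul, smul_eq_mul] at h
    linarith
  · have hn : ⇑(hherm.eigenvectorBasis i₀) ⬝ᵥ ⇑(hherm.eigenvectorBasis i₀) = 1 := by
      have h := hherm.eigenvectorBasis.orthonormal.1 i₀
      have h2 : (inner ℝ (hherm.eigenvectorBasis i₀) (hherm.eigenvectorBasis i₀) : ℝ) = 1 := by
        rw [real_inner_self_eq_norm_sq, h]; norm_num
      simpa only [EuclideanSpace.inner_eq_star_dotProduct, star_trivial] using h2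
    exact ⟨⇑(hherm.eigenvectorBasis i₀), hn, by
      rw [hherm.mulVec_eigenvectorBasis, dotProduct_smul, hn, smul_eq_mul, mul_one]⟩
  · rw [htr]
    calc ∑ i, hherm.eigenvalues i ≤ ∑ _i : Fin d, t :=
          Finset.sum_le_sum fun i _ => hmax i (Finset.mem_univ i)
      _ = d * t := by simp [Finset.sum_const, mul_comm]
  · intro heq
    have hall : hherm.eigenvalues = fun _ => t := by
      have hsum : ∑ i, (t - hherm.eigenvalues i) = 0 := by
        rw [Finset.sum_sub_distrib]
        simp only [Finset.sum_const, Finset.card_univ, Fintype.card_fin, nsmul_eq_mul]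
        rw [← htr]; linarith
      funext i
      have := (Finset.sum_eq_zero_iff_of_nonneg
        (fun j _ => sub_nonneg.2 (hmax j (Finset.mem_univ j)))).mp hsum i (Finset.mem_univ i)
      linarith
    rw [hspec, hall, hconst, Matrix.mul_smul, Matrix.smul_mul, Matrix.mul_one, hUnit]

open scoped MatrixOrder

theorem stmt1 {d : ℕ} (hd : 1 ≤ d) (H : Matrix (Fin d) (Fin d) ℝ)
    (hH : H.PosDef) (c : ℝ) (hc : 0 < c) :
    (((c / (d : ℝ)) • H⁻¹).PosSemidef ∧
      (H * ((c / (d : ℝ)) • H⁻¹)).trace = c ∧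
      VH H ((c / (d : ℝ)) • H⁻¹) = c / (d : ℝ)) ∧
    (∀ S : Matrix (Fin d) (Fin d) ℝ, S.PosSemidef → (H * S).trace = c →
      c / (d : ℝ) ≤ VH H S) ∧
    (∀ S : Matrix (Fin d) (Fin d) ℝ, S.PosSemidef → (H * S).trace = c →
      VH H S = c / (d : ℝ) → S = (c / (d : ℝ)) • H⁻¹) := by
  have hd0 : (0:ℝ) < (d:ℝ) := by exact_mod_cast hd
  have hcd : 0 ≤ c / (d:ℝ) := le_of_lt (div_pos hc hd0)
  have hHdet : IsUnit H.det := isUnit_iff_ne_zero.mpr hH.det_pos.ne'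
  set B := CFC.sqrt H with hBdef
  have hBpsd := Matrix.nonneg_iff_posSemidef.mp (CFC.sqrt_nonneg H)
  have hBB : B * B = H := CFC.sqrt_mul_sqrt_self H hH.posSemidef.nonneg
  have hBsymm : Bᵀ = B := by
    rw [← Matrix.conjTranspose_eq_transpose_of_trivial]; exact hBpsd.1
  have hBdet : IsUnit B.det := by
    have h : B.det * B.det = H.det := by rw [← det_mul, hBB]
    refine isUnit_iff_ne_zero.mpr fun h0 => hH.det_pos.ne' ?_
    rw [← h, h0, mul_zero]
  have hBinv : B⁻¹ * B = 1 := nonsing_inv_mul B hBdet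
  have hBinv' : B * B⁻¹ = 1 := mul_nonsing_inv B hBdet
  have hHinv : H⁻¹ = B⁻¹ * B⁻¹ := by rw [← hBB, Matrix.mul_inv_rev]
  have hBHB : Bᵀ * H⁻¹ * B = 1 := by
    rw [hBsymm, hHinv, ← Matrix.mul_assoc, hBinv', Matrix.one_mul, hBinv]
  -- set change of variables
  have hset : ∀ S : Matrix (Fin d) (Fin d) ℝ,
      {r : ℝ | ∃ w : Fin d → ℝ, w ⬝ᵥ (H⁻¹ *ᵥ w) ≤ 1 ∧ r = w ⬝ᵥ (S *ᵥ w)} =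
      {r : ℝ | ∃ v : Fin d → ℝ, v ⬝ᵥ v ≤ 1 ∧ r = v ⬝ᵥ ((Bᵀ * S * B) *ᵥ v)} := by
    intro S
    ext r
    constructor
    · rintro ⟨w, hw1, rfl⟩
      have hw : B *ᵥ (B⁻¹ *ᵥ w) = w := by rw [mulVec_mulVec, hBinv', one_mulVec]
      refine ⟨B⁻¹ *ᵥ w, ?_, ?_⟩
      · have h := conj_quad B H⁻¹ (B⁻¹ *ᵥ w)
        rw [hw, hBHB, one_mulVec] at h
        rw [← h]; exact hw1
      · have h := conj_quad B S (B⁻¹ *ᵥ w)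
        rw [hw] at h
        rw [← h]
    · rintro ⟨v, hv1, rfl⟩
      refine ⟨B *ᵥ v, ?_, (conj_quad B S v).symm⟩
      rw [conj_quad B H⁻¹ v, hBHB, one_mulVec]; exact hv1
  -- main work for parts (ii) and (iii)
  have main : ∀ S : Matrix (Fin d) (Fin d) ℝ, S.PosSemidef → (H * S).trace = c →
      (c / (d:ℝ) ≤ VH H S ∧ (VH H S = c / (d:ℝ) → S = (c / (d:ℝ)) • H⁻¹)) := by
    intro S hS htrS
    set M := Bᵀ * S * B with hMdef
    have hM : M.PosSemidef := by
      have h3 : B * S * Bᴴ = Bᵀ * S * B := by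
        rw [Matrix.conjTranspose_eq_transpose_of_trivial, hBsymm]
      have := hS.mul_mul_conjTranspose_same B
      rwa [h3] at this
    have htrM : M.trace = c := by
      rw [hMdef, hBsymm, trace_mul_cycle, hBB, htrS]
    obtain ⟨t, ht0, hub, ⟨v₀, hv₀1, hv₀2⟩, htrle, heqcase⟩ := spec hd M hM
    have hVH : VH H S = sSup {r : ℝ | ∃ v : Fin d → ℝ, v ⬝ᵥ v ≤ 1 ∧ r = v ⬝ᵥ (M *ᵥ v)} := by
      unfold VH; rw [hset S]
    have hbdd : BddAbove {r : ℝ | ∃ v : Fin d → ℝ, v ⬝ᵥ v ≤ 1 ∧ r = v ⬝ᵥ (M *ᵥ v)} := by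
      refine ⟨t, ?_⟩
      rintro r ⟨v, hv, rfl⟩
      calc v ⬝ᵥ (M *ᵥ v) ≤ t * (v ⬝ᵥ v) := hub v
        _ ≤ t * 1 := mul_le_mul_of_nonneg_left hv ht0
        _ = t := mul_one t
    have hmem : t ∈ {r : ℝ | ∃ v : Fin d → ℝ, v ⬝ᵥ v ≤ 1 ∧ r = v ⬝ᵥ (M *ᵥ v)} :=
      ⟨v₀, le_of_eq hv₀1, hv₀2.symm⟩
    have hct : c / (d:ℝ) ≤ t := by
      rw [div_le_iff₀ hd0, mul_comm]
      rw [htrM] at htrle; exact htrle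
    have htle : t ≤ VH H S := by
      rw [hVH]; exact le_csSup hbdd hmem
    refine ⟨le_trans hct htle, fun hVeq => ?_⟩
    have hteq : t = c / (d:ℝ) := le_antisymm (hVeq ▸ htle) hct
    have hMeq : M = t • 1 := by
      apply heqcase
      rw [htrM, hteq]
      field_simp
    have hSM : S = B⁻¹ * M * B⁻¹ := by
      rw [hMdef, hBsymm, ← Matrix.mul_assoc, ← Matrix.mul_assoc, hBinv, Matrix.one_mul,
        Matrix.mul_assoc, hBinv', Matrix.mul_one]
    rw [hSM, hMeq, hteq, Matrix.mul_smul, Matrix.smul_mul, Matrix.mul_one, ← hHinv]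
  -- part (i) pieces
  have hpsd1 : ((c / (d : ℝ)) • H⁻¹).PosSemidef := by
    refine Matrix.PosSemidef.of_dotProduct_mulVec_nonneg ?_ fun x => ?_
    · show ((c / (d : ℝ)) • H⁻¹)ᴴ = (c / (d : ℝ)) • H⁻¹
      rw [Matrix.conjTranspose_smul, hH.inv.1.eq, star_trivial]
    · have := hH.inv.posSemidef.dotProduct_mulVec_nonneg x
      simp only [smul_mulVec, dotProduct_smul, smul_eq_mul]
      positivity
  have htr1 : (H * ((c / (d : ℝ)) • H⁻¹)).trace = c := by
    rw [Matrix.mul_smul, trace_smul, mul_nonsing_inv H hHdet, trace_one, Fintype.card_fin, smul_eq_mul]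
    field_simp
  refine ⟨⟨hpsd1, htr1, ?_⟩, fun S hS htrS => (main S hS htrS).1,
    fun S hS htrS hV => (main S hS htrS).2 hV⟩
  refine le_antisymm ?_ (main _ hpsd1 htr1).1
  have h0 : (0:ℝ) ∈ {r : ℝ | ∃ w : Fin d → ℝ, w ⬝ᵥ (H⁻¹ *ᵥ w) ≤ 1 ∧
      r = w ⬝ᵥ (((c / (d : ℝ)) • H⁻¹) *ᵥ w)} := ⟨0, by simp, by simp⟩
  apply csSup_le ⟨0, h0⟩
  rintro r ⟨w, hw, rfl⟩
  rw [smul_mulVec, dotProduct_smul, smul_eq_mul]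
  exact mul_le_of_le_one_right hcd hw
end

section
/- Let d ≥ 1, c > 0, and let M and H be d×d real symmetric positive definite matrices. Define Σ_M(H) := (c / tr(HM))·M. Then tr(H·Σ_M(H)) = c, and the regret ratio satisfies V_H(Σ_M(H)) / V_H((c/d)·H⁻¹) = d·λ_max(H^{1/2} M H^{1/2}) / tr(HM). This ratio always lies in [1, d], and it equals 1 if and only if M = α·H⁻¹ for some α > 0. -/
open Matrix
open scoped MatrixOrder

/-- Largest eigenvalue of a real symmetric (Hermitian) matrix; junk value `0` otherwise. -/
noncomputable def lamMax {d : ℕ} (M : Matrix (Fin d) (Fin d) ℝ) : ℝ :=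
  if h : M.IsHermitian then ⨆ i, h.eigenvalues i else 0

section Helpers

variable {d : ℕ}

lemma real_conjTranspose' (A : Matrix (Fin d) (Fin d) ℝ) : Aᴴ = Aᵀ := by
  ext i j; simp [conjTranspose_apply]

lemma herm_transpose' {A : Matrix (Fin d) (Fin d) ℝ} (hA : A.IsHermitian) : Aᵀ = A := by
  rw [← real_conjTranspose']; exact hA.eq

lemma conj_dot' (B C : Matrix (Fin d) (Fin d) ℝ) (hB : Bᵀ = B) (x y : Fin d → ℝ) :
    (B *ᵥ x) ⬝ᵥ (C *ᵥ y) = x ⬝ᵥ ((B * C) *ᵥ y) := by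
  rw [← hB, mulVec_transpose, hB, dotProduct_mulVec, vecMul_vecMul, ← dotProduct_mulVec]

lemma lamMax_eq' {A : Matrix (Fin d) (Fin d) ℝ} (hA : A.IsHermitian) :
    lamMax A = ⨆ i, hA.eigenvalues i := by rw [lamMax, dif_pos hA]

lemma eig_le_lamMax' [NeZero d] {A : Matrix (Fin d) (Fin d) ℝ} (hA : A.IsHermitian) (i : Fin d) :
    hA.eigenvalues i ≤ lamMax A := by
  rw [lamMax_eq' hA]; exact le_ciSup (Set.Finite.bddAbove (Set.finite_range _)) i

lemma exists_lamMax' [NeZero d] {A : Matrix (Fin d) (Fin d) ℝ} (hA : A.IsHermitian) :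
    ∃ i, lamMax A = hA.eigenvalues i := by
  obtain ⟨i, hi⟩ := Finite.exists_max hA.eigenvalues
  exact ⟨i, le_antisymm (by rw [lamMax_eq' hA]; exact ciSup_le hi) (eig_le_lamMax' hA i)⟩

lemma trace_eq_sum_eig' {A : Matrix (Fin d) (Fin d) ℝ} (hA : A.IsHermitian) :
    A.trace = ∑ i, hA.eigenvalues i := by
  conv_lhs => rw [hA.spectral_theorem, Unitary.conjStarAlgAut_apply]
  rw [trace_mul_cycle]
  rw [show (star (hA.eigenvectorUnitary : Matrix (Fin d) (Fin d) ℝ)) *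
      (hA.eigenvectorUnitary : Matrix (Fin d) (Fin d) ℝ) = 1 from
    Matrix.mem_unitaryGroup_iff'.mp (hA.eigenvectorUnitary).2]
  simp [trace_diagonal]

lemma quad_expand' {A : Matrix (Fin d) (Fin d) ℝ} (hA : A.IsHermitian) (x : Fin d → ℝ) :
    x ⬝ᵥ A *ᵥ x = ∑ i, hA.eigenvalues i *
      (x ᵥ* (hA.eigenvectorUnitary : Matrix (Fin d) (Fin d) ℝ)) i ^ 2 := by
  set U := (hA.eigenvectorUnitary : Matrix (Fin d) (Fin d) ℝ) with hU
  set y := x ᵥ* U with hy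
  have hsU : star U *ᵥ x = y := by
    rw [show star U = Uᴴ from rfl, show Uᴴ = Uᵀ by ext i j; simp [conjTranspose_apply],
      mulVec_transpose, hy]
  conv_lhs => rw [hA.spectral_theorem, Unitary.conjStarAlgAut_apply]
  rw [dotProduct_mulVec, ← hU, ← vecMul_vecMul, ← vecMul_vecMul, ← dotProduct_mulVec, hsU, ← hy]
  simp only [dotProduct, vecMul_diagonal]
  exact Finset.sum_congr rfl fun i _ => by simp; ring

lemma dot_self_eq' {A : Matrix (Fin d) (Fin d) ℝ} (hA : A.IsHermitian) (x : Fin d → ℝ) :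
    (x ᵥ* (hA.eigenvectorUnitary : Matrix (Fin d) (Fin d) ℝ)) ⬝ᵥ
      (x ᵥ* (hA.eigenvectorUnitary : Matrix (Fin d) (Fin d) ℝ)) = x ⬝ᵥ x := by
  set U := (hA.eigenvectorUnitary : Matrix (Fin d) (Fin d) ℝ) with hU
  have hsU : star U *ᵥ x = x ᵥ* U := by
    rw [show star U = Uᴴ from rfl, show Uᴴ = Uᵀ by ext i j; simp [conjTranspose_apply],
      mulVec_transpose]
  conv_lhs => rw [← hsU]
  rw [dotProduct_mulVec, hsU, vecMul_vecMul, Matrix.mem_unitaryGroup_iff.mp hA.eigenvectorUnitary.2,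
    vecMul_one]

lemma quad_le' [NeZero d] {A : Matrix (Fin d) (Fin d) ℝ} (hA : A.IsHermitian) (x : Fin d → ℝ) :
    x ⬝ᵥ A *ᵥ x ≤ lamMax A * (x ⬝ᵥ x) := by
  rw [quad_expand' hA x, ← dot_self_eq' hA x]
  set y := x ᵥ* (hA.eigenvectorUnitary : Matrix (Fin d) (Fin d) ℝ)
  rw [show y ⬝ᵥ y = ∑ i, y i ^ 2 by simp [dotProduct, sq], Finset.mul_sum]
  exact Finset.sum_le_sum fun i _ =>
    mul_le_mul_of_nonneg_right (eig_le_lamMax' hA i) (sq_nonneg _)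

lemma basis_dot' {A : Matrix (Fin d) (Fin d) ℝ} (hA : A.IsHermitian) (i : Fin d) :
    ⇑(hA.eigenvectorBasis i) ⬝ᵥ ⇑(hA.eigenvectorBasis i) = 1 := by
  have h : ‖hA.eigenvectorBasis i‖ = 1 := hA.eigenvectorBasis.orthonormal.1 i
  have h2 : Real.sqrt (∑ j, ‖hA.eigenvectorBasis i j‖ ^ 2) = 1 := by
    rw [← EuclideanSpace.norm_eq]; exact h
  have h3 : ∑ j, ‖hA.eigenvectorBasis i j‖ ^ 2 = 1 := by
    have := congrArg (· ^ 2) h2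
    simpa [Real.sq_sqrt (Finset.sum_nonneg fun j _ => sq_nonneg _)] using this
  simpa [dotProduct, Real.norm_eq_abs, sq_abs, sq] using h3

lemma exists_unit_quad' [NeZero d] {A : Matrix (Fin d) (Fin d) ℝ} (hA : A.IsHermitian) :
    ∃ x : Fin d → ℝ, x ⬝ᵥ x = 1 ∧ x ⬝ᵥ A *ᵥ x = lamMax A := by
  obtain ⟨i₀, hi₀⟩ := Finite.exists_max hA.eigenvalues
  have hlam : lamMax A = hA.eigenvalues i₀ :=
    le_antisymm (by rw [lamMax_eq' hA]; exact ciSup_le hi₀) (eig_le_lamMax' hA i₀)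
  refine ⟨⇑(hA.eigenvectorBasis i₀), basis_dot' hA i₀, ?_⟩
  rw [hA.mulVec_eigenvectorBasis, dotProduct_smul, basis_dot' hA i₀, hlam]
  simp

lemma lamMax_unique' [NeZero d] {A : Matrix (Fin d) (Fin d) ℝ} (hA : A.IsHermitian) {l : ℝ}
    (hub : ∀ x : Fin d → ℝ, x ⬝ᵥ A *ᵥ x ≤ l * (x ⬝ᵥ x))
    (hex : ∃ x : Fin d → ℝ, x ⬝ᵥ x = 1 ∧ x ⬝ᵥ A *ᵥ x = l) : lamMax A = l := by
  obtain ⟨x, hx1, hx2⟩ := exists_unit_quad' hA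
  obtain ⟨z, hz1, hz2⟩ := hex
  refine le_antisymm ?_ ?_
  · calc lamMax A = x ⬝ᵥ A *ᵥ x := hx2.symm
      _ ≤ l * (x ⬝ᵥ x) := hub x
      _ = l := by rw [hx1, mul_one]
  · calc l = z ⬝ᵥ A *ᵥ z := hz2.symm
      _ ≤ lamMax A * (z ⬝ᵥ z) := quad_le' hA z
      _ = lamMax A := by rw [hz1, mul_one]

lemma isHermitian_smul' {A : Matrix (Fin d) (Fin d) ℝ} (hA : A.IsHermitian) (s : ℝ) :
    (s • A).IsHermitian := by
  rw [IsHermitian, conjTranspose_smul, star_trivial, hA.eq]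

lemma posSemidef_smul' {S : Matrix (Fin d) (Fin d) ℝ} (hS : S.PosSemidef) {s : ℝ} (hs : 0 ≤ s) :
    (s • S).PosSemidef := by
  exact hS.smul hs

lemma lamMax_smul' [NeZero d] {A : Matrix (Fin d) (Fin d) ℝ} (hA : A.IsHermitian) {s : ℝ}
    (hs : 0 ≤ s) : lamMax (s • A) = s * lamMax A := by
  refine lamMax_unique' (isHermitian_smul' hA s) (fun x => ?_) ?_
  · rw [smul_mulVec, dotProduct_smul, smul_eq_mul, mul_assoc]
    exact mul_le_mul_of_nonneg_left (quad_le' hA x) hs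
  · obtain ⟨x, hx1, hx2⟩ := exists_unit_quad' hA
    exact ⟨x, hx1, by rw [smul_mulVec, dotProduct_smul, smul_eq_mul, hx2]⟩

lemma lamMax_one' [NeZero d] : lamMax (1 : Matrix (Fin d) (Fin d) ℝ) = 1 := by
  refine lamMax_unique' isHermitian_one (fun x => by rw [one_mulVec, one_mul]) ?_
  refine ⟨Pi.single 0 1, ?_, ?_⟩
  · simp [dotProduct, Pi.single_apply]
  · rw [one_mulVec]; simp [dotProduct, Pi.single_apply]

lemma eq_smul_one' {A : Matrix (Fin d) (Fin d) ℝ} (hA : A.IsHermitian) {l : ℝ}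
    (h : ∀ i, hA.eigenvalues i = l) : A = l • 1 := by
  have hD : diagonal (RCLike.ofReal ∘ hA.eigenvalues) = l • (1 : Matrix (Fin d) (Fin d) ℝ) := by
    ext i j
    by_cases hij : i = j <;> simp [hij, diagonal, h, Matrix.one_apply]
  conv_lhs => rw [hA.spectral_theorem, Unitary.conjStarAlgAut_apply]
  rw [hD, Matrix.mul_smul, Matrix.smul_mul, Matrix.mul_one,
    Matrix.mem_unitaryGroup_iff.mp hA.eigenvectorUnitary.2]

lemma VH_eq' [NeZero d] {H S : Matrix (Fin d) (Fin d) ℝ} (hH : H.PosDef) (hS : S.PosSemidef) :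
    VH H S = lamMax (CFC.sqrt H * S * CFC.sqrt H) := by
  set B := CFC.sqrt H with hBdef
  have hBh : B.IsHermitian := (CFC.sqrt_nonneg H).posSemidef.1
  have hBt : Bᵀ = B := herm_transpose' hBh
  have hBB : B * B = H := CFC.sqrt_mul_sqrt_self H hH.posSemidef.nonneg
  have hdet : IsUnit B.det := by
    have h1 : B.det * B.det = H.det := by rw [← det_mul, hBB]
    refine isUnit_iff_ne_zero.mpr fun h0 => ?_
    rw [h0, mul_zero] at h1
    exact hH.det_pos.ne' h1.symm
  have hB1 : B * H⁻¹ * B = 1 := by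
    rw [← hBB, Matrix.mul_inv_rev, ← Matrix.mul_assoc B B⁻¹ B⁻¹,
      Matrix.mul_nonsing_inv B hdet, Matrix.one_mul, Matrix.nonsing_inv_mul B hdet]
  set A := B * S * B with hAdef
  have hApsd : A.PosSemidef := by
    have := hS.conjTranspose_mul_mul_same B
    rwa [real_conjTranspose', hBt] at this
  have hAh : A.IsHermitian := hApsd.1
  have hlam0 : 0 ≤ lamMax A := by
    obtain ⟨i, hi⟩ := exists_lamMax' hAh
    rw [hi]; exact hApsd.eigenvalues_nonneg i
  have key1 : ∀ x : Fin d → ℝ, (B *ᵥ x) ⬝ᵥ (H⁻¹ *ᵥ (B *ᵥ x)) = x ⬝ᵥ x := fun x => by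
    rw [mulVec_mulVec, conj_dot' B (H⁻¹ * B) hBt, ← Matrix.mul_assoc, hB1, one_mulVec]
  have key2 : ∀ x : Fin d → ℝ, (B *ᵥ x) ⬝ᵥ (S *ᵥ (B *ᵥ x)) = x ⬝ᵥ A *ᵥ x := fun x => by
    rw [mulVec_mulVec, conj_dot' B (S * B) hBt, ← Matrix.mul_assoc]
  have hub : ∀ r ∈ {r : ℝ | ∃ w : Fin d → ℝ, w ⬝ᵥ (H⁻¹ *ᵥ w) ≤ 1 ∧ r = w ⬝ᵥ (S *ᵥ w)},
      r ≤ lamMax A := by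
    rintro r ⟨w, hw, rfl⟩
    set x := B⁻¹ *ᵥ w with hxdef
    have hwx : B *ᵥ x = w := by
      rw [hxdef, mulVec_mulVec, Matrix.mul_nonsing_inv B hdet, one_mulVec]
    calc w ⬝ᵥ (S *ᵥ w) = x ⬝ᵥ A *ᵥ x := by rw [← hwx, key2]
      _ ≤ lamMax A * (x ⬝ᵥ x) := quad_le' hAh x
      _ = lamMax A * (w ⬝ᵥ (H⁻¹ *ᵥ w)) := by rw [← hwx, key1]
      _ ≤ lamMax A * 1 := mul_le_mul_of_nonneg_left hw hlam0
      _ = lamMax A := mul_one _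
  have hmem : lamMax A ∈ {r : ℝ | ∃ w : Fin d → ℝ, w ⬝ᵥ (H⁻¹ *ᵥ w) ≤ 1 ∧ r = w ⬝ᵥ (S *ᵥ w)} := by
    obtain ⟨x, hx1, hx2⟩ := exists_unit_quad' hAh
    exact ⟨B *ᵥ x, by rw [key1, hx1], by rw [key2, hx2]⟩
  exact le_antisymm (csSup_le ⟨_, hmem⟩ hub) (le_csSup ⟨_, hub⟩ hmem)

end Helpers

theorem stmt6 {d : ℕ} (hd : 1 ≤ d) (c : ℝ) (hc : 0 < c)
    (M H : Matrix (Fin d) (Fin d) ℝ) (hM : M.PosDef) (hH : H.PosDef) :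
    (H * ((c / (H * M).trace) • M)).trace = c ∧
    VH H ((c / (H * M).trace) • M) / VH H ((c / (d : ℝ)) • H⁻¹)
      = (d : ℝ) * lamMax (CFC.sqrt H * M * CFC.sqrt H) / (H * M).trace ∧
    1 ≤ VH H ((c / (H * M).trace) • M) / VH H ((c / (d : ℝ)) • H⁻¹) ∧
    VH H ((c / (H * M).trace) • M) / VH H ((c / (d : ℝ)) • H⁻¹) ≤ (d : ℝ) ∧
    (VH H ((c / (H * M).trace) • M) / VH H ((c / (d : ℝ)) • H⁻¹) = 1 ↔
      ∃ α : ℝ, 0 < α ∧ M = α • H⁻¹) := by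
  haveI : NeZero d := ⟨by omega⟩
  set B := CFC.sqrt H with hBdef
  have hBh : B.IsHermitian := (CFC.sqrt_nonneg H).posSemidef.1
  have hBt : Bᵀ = B := herm_transpose' hBh
  have hBB : B * B = H := CFC.sqrt_mul_sqrt_self H hH.posSemidef.nonneg
  have hdet : IsUnit B.det := by
    have h1 : B.det * B.det = H.det := by rw [← det_mul, hBB]
    refine isUnit_iff_ne_zero.mpr fun h0 => ?_
    rw [h0, mul_zero] at h1
    exact hH.det_pos.ne' h1.symm
  have hB1 : B * H⁻¹ * B = 1 := by
    rw [← hBB, Matrix.mul_inv_rev, ← Matrix.mul_assoc B B⁻¹ B⁻¹,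
      Matrix.mul_nonsing_inv B hdet, Matrix.one_mul, Matrix.nonsing_inv_mul B hdet]
  set A := B * M * B with hAdef
  have hApsd : A.PosSemidef := by
    have := hM.posSemidef.conjTranspose_mul_mul_same B
    rwa [real_conjTranspose', hBt] at this
  have hAh : A.IsHermitian := hApsd.1
  have hApd : A.PosDef := by
    refine .of_dotProduct_mulVec_pos hAh fun x hx => ?_
    have hBx : B *ᵥ x ≠ 0 := by
      intro h0
      apply hx
      have := congrArg (fun v => B⁻¹ *ᵥ v) h0
      simpa [mulVec_mulVec, Matrix.nonsing_inv_mul B hdet] using this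
    have hpos := hM.dotProduct_mulVec_pos (x := B *ᵥ x) (by simpa using hBx)
    have heq : star x ⬝ᵥ (A *ᵥ x) = star (B *ᵥ x) ⬝ᵥ (M *ᵥ (B *ᵥ x)) := by
      simp only [star_trivial]
      rw [hAdef, Matrix.mul_assoc, ← conj_dot' B (M * B) hBt x x, mulVec_mulVec]
    rw [heq]; exact hpos
  set L := lamMax A with hLdef
  set t := (H * M).trace with htdef
  have htA : A.trace = t := by
    rw [htdef, hAdef, trace_mul_cycle, hBB]
  have htsum : t = ∑ i, hAh.eigenvalues i := by rw [← htA, trace_eq_sum_eig' hAh]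
  have ht : 0 < t := by
    rw [htsum]
    exact Finset.sum_pos (fun i _ => hApd.eigenvalues_pos i) Finset.univ_nonempty
  have hd0 : (0 : ℝ) < d := by exact_mod_cast Nat.lt_of_lt_of_le Nat.zero_lt_one hd
  have hLpos : 0 < L := by
    obtain ⟨i, hi⟩ := exists_lamMax' hAh
    rw [hLdef, hi]; exact hApd.eigenvalues_pos i
  -- value of the two VH's
  have hV1 : VH H ((c / t) • M) = (c / t) * L := by
    rw [VH_eq' hH (posSemidef_smul' hM.posSemidef (le_of_lt (div_pos hc ht))),
      Matrix.mul_smul, Matrix.smul_mul, lamMax_smul' hAh (le_of_lt (div_pos hc ht))]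
  have hV2 : VH H ((c / (d : ℝ)) • H⁻¹) = c / d := by
    rw [VH_eq' hH (posSemidef_smul' hH.inv.posSemidef (le_of_lt (div_pos hc hd0))),
      Matrix.mul_smul, Matrix.smul_mul, hB1, lamMax_smul' isHermitian_one
        (le_of_lt (div_pos hc hd0)), lamMax_one', mul_one]
  have hratio : VH H ((c / t) • M) / VH H ((c / (d : ℝ)) • H⁻¹) = (d : ℝ) * L / t := by
    rw [hV1, hV2]
    field_simp
  have hLt : L ≤ t := by
    obtain ⟨i, hi⟩ := exists_lamMax' hAh
    rw [hLdef, hi, htsum]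
    exact Finset.single_le_sum (fun j _ => (hApd.eigenvalues_pos j).le) (Finset.mem_univ i)
  have htL : t ≤ (d : ℝ) * L := by
    rw [htsum]
    calc ∑ i, hAh.eigenvalues i ≤ ∑ _i : Fin d, L :=
          Finset.sum_le_sum fun i _ => by rw [hLdef]; exact eig_le_lamMax' hAh i
      _ = (d : ℝ) * L := by simp [mul_comm]
  refine ⟨?_, ?_, ?_, ?_, ?_⟩
  · rw [Matrix.mul_smul, trace_smul, ← htdef, smul_eq_mul, div_mul_cancel₀ c ht.ne']
  · exact hratio
  · rw [hratio]; rw [one_le_div ht]; exact htL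
  · rw [hratio, div_le_iff₀ ht]
    calc (d : ℝ) * L ≤ (d : ℝ) * t := mul_le_mul_of_nonneg_left hLt hd0.le
      _ ≤ (d : ℝ) * t := le_refl _
  · rw [hratio, div_eq_one_iff_eq ht.ne']
    constructor
    · intro heq
      have hall : ∀ i, hAh.eigenvalues i = L := by
        have hsum0 : ∑ i, (L - hAh.eigenvalues i) = 0 := by
          rw [Finset.sum_sub_distrib, Finset.sum_const, Finset.card_univ, Fintype.card_fin,
            nsmul_eq_mul, ← htsum]
          linarith [heq]
        intro i
        have := (Finset.sum_eq_zero_iff_of_nonneg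
          (fun j _ => sub_nonneg.mpr (eig_le_lamMax' hAh j))).mp hsum0 i (Finset.mem_univ i)
        linarith
      have hA1 : A = L • 1 := eq_smul_one' hAh hall
      refine ⟨L, hLpos, ?_⟩
      have hMeq : M = B⁻¹ * A * B⁻¹ := by
        rw [hAdef, ← Matrix.mul_assoc, ← Matrix.mul_assoc, Matrix.nonsing_inv_mul B hdet,
          Matrix.one_mul, Matrix.mul_assoc, Matrix.mul_nonsing_inv B hdet, Matrix.mul_one]
      rw [hMeq, hA1, Matrix.mul_smul, Matrix.smul_mul, Matrix.mul_one, ← Matrix.mul_inv_rev, hBB]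
    · rintro ⟨α, hα, rfl⟩
      have hAeq : A = α • (1 : Matrix (Fin d) (Fin d) ℝ) := by
        rw [hAdef, Matrix.mul_smul, Matrix.smul_mul, hB1]
      have hL : L = α := by
        rw [hLdef, hAeq, lamMax_smul' isHermitian_one hα.le, lamMax_one', mul_one]
      have htval : t = α * d := by
        rw [← htA, hAeq, trace_smul, trace_one, smul_eq_mul, Fintype.card_fin]
      rw [hL, htval]; ring
end

section
/- Let n ≥ 1, let V : ℝ^n → ℝ be twice continuously differentiable, and let Δt ∈ ℝ. Define the leapfrog step Ψ : ℝ^n × ℝ^n → ℝ^n × ℝ^n by p_{1/2} := p − (Δt/2)∇V(q), q′ := q + Δt·p_{1/2}, p′ := p_{1/2} − (Δt/2)∇V(q′), Ψ(q,p) := (q′, p′). Then Ψ is differentiable at every point, and at every (q,p) the 2n×2n matrix M of the derivative DΨ(q,p) (in the block coordinates (q,p) with respect to the standard basis) is symplectic: Mᵀ J M = J; consequently det M = 1. -/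
open Matrix

/-- The canonical symplectic matrix `J = [[0, I], [−I, 0]]` of size `2n × 2n`. -/
def Jmat (n : ℕ) : Matrix (Fin n ⊕ Fin n) (Fin n ⊕ Fin n) ℝ :=
  Matrix.fromBlocks 0 1 (-1) 0

/-- The gradient of `V` in standard coordinates: `(∇V(q))ᵢ = ∂V/∂qᵢ`. -/
noncomputable def gradV {n : ℕ} (V : (Fin n → ℝ) → ℝ) (q : Fin n → ℝ) : Fin n → ℝ :=
  fun i => fderiv ℝ V q (Pi.single i 1)

/-- One leapfrog (velocity Verlet) step with potential `V` and step size `Δt`. -/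
noncomputable def leapfrog {n : ℕ} (V : (Fin n → ℝ) → ℝ) (Δt : ℝ) :
    (Fin n → ℝ) × (Fin n → ℝ) → (Fin n → ℝ) × (Fin n → ℝ) :=
  fun s =>
    let ph := s.2 - (Δt / 2) • gradV V s.1
    let q' := s.1 + Δt • ph
    (q', ph - (Δt / 2) • gradV V q')

/-- The standard basis of `ℝ^n × ℝ^n`, indexed by `Fin n ⊕ Fin n`. -/
noncomputable def stdBasis (n : ℕ) :
    Module.Basis (Fin n ⊕ Fin n) ℝ ((Fin n → ℝ) × (Fin n → ℝ)) :=
  (Pi.basisFun ℝ (Fin n)).prod (Pi.basisFun ℝ (Fin n))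

/-! ### Auxiliary material -/

namespace LeapfrogAux

variable {n : ℕ} {V : (Fin n → ℝ) → ℝ}

local notation "E" => Fin n → ℝ

lemma gradV_diff (hV : ContDiff ℝ 2 V) : Differentiable ℝ (gradV V) := by
  have h1 : Differentiable ℝ (fderiv ℝ V) :=
    (hV.fderiv_right (m := 1) le_rfl).differentiable one_ne_zero
  intro q
  rw [show (gradV V) = (fun q i => (fderiv ℝ V q) (Pi.single i 1)) from rfl,
    differentiableAt_pi]
  intro i
  exact (h1 q).clm_apply (differentiableAt_const _)

lemma fderiv_gradV_apply (hV : ContDiff ℝ 2 V) (q v : E) (i : Fin n) :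
    fderiv ℝ (gradV V) q v i = fderiv ℝ (fderiv ℝ V) q v (Pi.single i 1) := by
  have h1 : Differentiable ℝ (fderiv ℝ V) :=
    (hV.fderiv_right (m := 1) le_rfl).differentiable one_ne_zero
  have hd : ∀ j : Fin n, DifferentiableAt ℝ (fun q : E => (fderiv ℝ V q) (Pi.single j 1)) q :=
    fun j => (h1 q).clm_apply (differentiableAt_const _)
  have h2 : fderiv ℝ (gradV V) q =
      ContinuousLinearMap.pi fun i => fderiv ℝ (fun q : E => (fderiv ℝ V q) (Pi.single i 1)) q := by
    rw [show (gradV V) = (fun q i => (fderiv ℝ V q) (Pi.single i 1)) from rfl]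
    exact fderiv_pi hd
  rw [h2]
  simp only [ContinuousLinearMap.pi_apply]
  rw [fderiv_clm_apply (h1 q) (differentiableAt_const _)]
  simp

/-- The Hessian matrix of `V` at `q`. -/
noncomputable def Hmat (V : (Fin n → ℝ) → ℝ) (q : E) : Matrix (Fin n) (Fin n) ℝ :=
  fun i j => fderiv ℝ (gradV V) q (Pi.single j 1) i

lemma Hmat_symm (hV : ContDiff ℝ 2 V) (q : E) : (Hmat V q)ᵀ = Hmat V q := by
  have hs : IsSymmSndFDerivAt ℝ V q := hV.contDiffAt.isSymmSndFDerivAt (by norm_num)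
  ext i j
  simp only [transpose_apply, Hmat]
  rw [fderiv_gradV_apply hV, fderiv_gradV_apply hV]
  exact hs _ _

/-- One "kick" (momentum update). -/
noncomputable def kick (V : (Fin n → ℝ) → ℝ) (t : ℝ) : E × E → E × E :=
  fun s => (s.1, s.2 - t • gradV V s.1)

/-- One "drift" (position update). -/
def drift (Δt : ℝ) : E × E → E × E :=
  fun s => (s.1 + Δt • s.2, s.2)

lemma leapfrog_eq (Δt : ℝ) :
    leapfrog V Δt = kick V (Δt / 2) ∘ drift Δt ∘ kick V (Δt / 2) := rfl

/-- Derivative of the kick. -/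
noncomputable def DK (V : (Fin n → ℝ) → ℝ) (t : ℝ) (q : E) : (E × E) →L[ℝ] (E × E) :=
  (ContinuousLinearMap.fst ℝ E E).prod
    (ContinuousLinearMap.snd ℝ E E -
      t • (fderiv ℝ (gradV V) q).comp (ContinuousLinearMap.fst ℝ E E))

/-- Derivative of the drift. -/
noncomputable def DD (Δt : ℝ) : (E × E) →L[ℝ] (E × E) :=
  (ContinuousLinearMap.fst ℝ E E + Δt • ContinuousLinearMap.snd ℝ E E).prod
    (ContinuousLinearMap.snd ℝ E E)

lemma kick_hasFDerivAt (hV : ContDiff ℝ 2 V) (t : ℝ) (s : E × E) :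
    HasFDerivAt (kick V t) (DK V t s.1) s := by
  have hg : HasFDerivAt (gradV V) (fderiv ℝ (gradV V) s.1) s.1 :=
    (gradV_diff hV s.1).hasFDerivAt
  exact (hasFDerivAt_fst).prodMk
    ((hasFDerivAt_snd).sub ((hg.comp s hasFDerivAt_fst).const_smul t))

lemma drift_hasFDerivAt (Δt : ℝ) (s : E × E) :
    HasFDerivAt (drift Δt) (DD (n := n) Δt) s :=
  (hasFDerivAt_fst.add (hasFDerivAt_snd.const_smul Δt)).prodMk hasFDerivAt_snd

/-- Block description of `toMatrix` over the standard product basis. -/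
lemma toMatrix_stdBasis (f : (E × E) →ₗ[ℝ] (E × E)) :
    LinearMap.toMatrix (stdBasis n) (stdBasis n) f =
      fromBlocks (fun i j => (f (Pi.single j 1, 0)).1 i)
        (fun i j => (f (0, Pi.single j 1)).1 i)
        (fun i j => (f (Pi.single j 1, 0)).2 i)
        (fun i j => (f (0, Pi.single j 1)).2 i) := by
  ext (i | i) (j | j) <;>
    simp [LinearMap.toMatrix_apply, _root_.stdBasis, fromBlocks,
      Module.Basis.prod_apply_inl_fst, Module.Basis.prod_apply_inl_snd, Module.Basis.prod_apply_inr_fst,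
      Module.Basis.prod_apply_inr_snd, Module.Basis.prod_repr_inl, Module.Basis.prod_repr_inr,
      Pi.basisFun_apply, Pi.basisFun_repr, Module.Basis.prod_apply]

lemma toMatrix_DK (hV : ContDiff ℝ 2 V) (t : ℝ) (q : E) :
    LinearMap.toMatrix (stdBasis n) (stdBasis n) (DK V t q : (E × E) →ₗ[ℝ] (E × E)) =
      fromBlocks 1 0 (-(t • Hmat V q)) 1 := by
  rw [toMatrix_stdBasis]
  ext (i | i) (j | j) <;>
    simp [DK, Hmat, fromBlocks, Matrix.one_apply, Pi.single_apply, eq_comm]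

lemma toMatrix_DD (Δt : ℝ) :
    LinearMap.toMatrix (stdBasis n) (stdBasis n) (DD (n := n) Δt : (E × E) →ₗ[ℝ] (E × E)) =
      fromBlocks 1 (Δt • (1 : Matrix (Fin n) (Fin n) ℝ)) 0 1 := by
  rw [toMatrix_stdBasis]
  ext (i | i) (j | j) <;>
    simp [DD, fromBlocks, Matrix.one_apply, Pi.single_apply, eq_comm]

lemma kick_symp (S : Matrix (Fin n) (Fin n) ℝ) (hS : Sᵀ = S) :
    (fromBlocks 1 0 S 1)ᵀ * Jmat n * fromBlocks 1 0 S 1 = Jmat n := by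
  simp [Jmat, fromBlocks_transpose, fromBlocks_multiply, hS]

lemma drift_symp (T : Matrix (Fin n) (Fin n) ℝ) (hT : Tᵀ = T) :
    (fromBlocks 1 T 0 1)ᵀ * Jmat n * fromBlocks 1 T 0 1 = Jmat n := by
  simp [Jmat, fromBlocks_transpose, fromBlocks_multiply, hT]

lemma symp_mul {A B : Matrix (Fin n ⊕ Fin n) (Fin n ⊕ Fin n) ℝ}
    (hA : Aᵀ * Jmat n * A = Jmat n) (hB : Bᵀ * Jmat n * B = Jmat n) :
    (A * B)ᵀ * Jmat n * (A * B) = Jmat n := by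
  have : (A * B)ᵀ * Jmat n * (A * B) = Bᵀ * (Aᵀ * Jmat n * A) * B := by
    rw [transpose_mul]; noncomm_ring
  rw [this, hA]; exact hB

end LeapfrogAux

open LeapfrogAux in
theorem stmt11 {n : ℕ} (hn : 1 ≤ n) (V : (Fin n → ℝ) → ℝ)
    (hV : ContDiff ℝ 2 V) (Δt : ℝ) :
    ∀ x : (Fin n → ℝ) × (Fin n → ℝ),
      DifferentiableAt ℝ (leapfrog V Δt) x ∧
      (LinearMap.toMatrix (stdBasis n) (stdBasis n)
          ((fderiv ℝ (leapfrog V Δt) x :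
            ((Fin n → ℝ) × (Fin n → ℝ)) →L[ℝ] ((Fin n → ℝ) × (Fin n → ℝ))) :
            ((Fin n → ℝ) × (Fin n → ℝ)) →ₗ[ℝ] ((Fin n → ℝ) × (Fin n → ℝ))))ᵀ
          * Jmat n *
        LinearMap.toMatrix (stdBasis n) (stdBasis n)
          ((fderiv ℝ (leapfrog V Δt) x :
            ((Fin n → ℝ) × (Fin n → ℝ)) →L[ℝ] ((Fin n → ℝ) × (Fin n → ℝ))) :
            ((Fin n → ℝ) × (Fin n → ℝ)) →ₗ[ℝ] ((Fin n → ℝ) × (Fin n → ℝ)))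
        = Jmat n ∧
      (LinearMap.toMatrix (stdBasis n) (stdBasis n)
          ((fderiv ℝ (leapfrog V Δt) x :
            ((Fin n → ℝ) × (Fin n → ℝ)) →L[ℝ] ((Fin n → ℝ) × (Fin n → ℝ))) :
            ((Fin n → ℝ) × (Fin n → ℝ)) →ₗ[ℝ] ((Fin n → ℝ) × (Fin n → ℝ)))).det = 1 := by
  intro x
  set t := Δt / 2 with ht
  -- the three derivative maps along the composition
  have h1 : HasFDerivAt (kick V t) (DK V t x.1) x := kick_hasFDerivAt hV t x
  have h2 : HasFDerivAt (drift Δt) (DD Δt) (kick V t x) := drift_hasFDerivAt Δt _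
  have h3 : HasFDerivAt (kick V t) (DK V t (drift Δt (kick V t x)).1)
      (drift Δt (kick V t x)) := kick_hasFDerivAt hV t _
  have hcomp : HasFDerivAt (leapfrog V Δt)
      ((DK V t (drift Δt (kick V t x)).1).comp ((DD Δt).comp (DK V t x.1))) x := by
    rw [leapfrog_eq]
    exact h3.comp x (h2.comp x h1)
  have hdiff : DifferentiableAt ℝ (leapfrog V Δt) x := hcomp.differentiableAt
  have hfd := hcomp.fderiv
  rw [hfd]
  set M := LinearMap.toMatrix (stdBasis n) (stdBasis n)
      (((DK V t (drift Δt (kick V t x)).1).comp ((DD Δt).comp (DK V t x.1)) :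
        ((Fin n → ℝ) × (Fin n → ℝ)) →L[ℝ] _) : _ →ₗ[ℝ] _) with hM
  have hMprod : M =
      (fromBlocks 1 0 (-(t • Hmat V (drift Δt (kick V t x)).1)) 1) *
      ((fromBlocks 1 (Δt • (1 : Matrix (Fin n) (Fin n) ℝ)) 0 1) *
        (fromBlocks 1 0 (-(t • Hmat V x.1)) 1)) := by
    rw [hM]
    rw [ContinuousLinearMap.toLinearMap_comp, ContinuousLinearMap.toLinearMap_comp,
      LinearMap.toMatrix_comp _ (stdBasis n) _, LinearMap.toMatrix_comp _ (stdBasis n) _,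
      toMatrix_DK hV, toMatrix_DD, toMatrix_DK hV]
  have hsymmK : ∀ q : Fin n → ℝ, (-(t • Hmat V q))ᵀ = -(t • Hmat V q) := by
    intro q
    rw [transpose_neg, transpose_smul, Hmat_symm hV]
  refine ⟨hdiff, ?_, ?_⟩
  · rw [hMprod]
    exact symp_mul (kick_symp _ (hsymmK _))
      (symp_mul (drift_symp _ (by rw [transpose_smul, transpose_one]))
        (kick_symp _ (hsymmK _)))
  · rw [hMprod]
    simp [Matrix.det_mul, Matrix.det_fromBlocks_zero₁₂, Matrix.det_fromBlocks_zero₂₁]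
end

section
/- Let k ≥ 2, τ ∈ ℝ, m > 0, and let Σ be a k×k real symmetric positive definite matrix with log det Σ ≥ k·τ and tr Σ ≤ m. Then the smallest eigenvalue of Σ satisfies λ_min(Σ) ≥ exp(k·τ) · (k−1)^{k−1} / m^{k−1}. -/
open Matrix Finset

lemma amgm {ι : Type*} (s : Finset ι) (z : ι → ℝ) (hz : ∀ i ∈ s, 0 ≤ z i) :
    ∏ i ∈ s, z i ≤ ((∑ i ∈ s, z i) / s.card) ^ s.card := by
  rcases Nat.eq_zero_or_pos s.card with h0 | hpos
  · simp [Finset.card_eq_zero.mp h0]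
  have hn : (0:ℝ) < s.card := by exact_mod_cast hpos
  have h := Real.geom_mean_le_arith_mean_weighted s (fun _ => (s.card : ℝ)⁻¹) z
    (fun i _ => by positivity)
    (by simp [Finset.sum_const]; field_simp)
    hz
  have hsum : ∑ i ∈ s, (s.card:ℝ)⁻¹ * z i = (∑ i ∈ s, z i) / s.card := by
    rw [← Finset.mul_sum]; ring
  have hprod : (∏ i ∈ s, z i ^ ((s.card:ℝ)⁻¹)) = (∏ i ∈ s, z i) ^ ((s.card:ℝ)⁻¹) :=
    Real.finset_prod_rpow s z hz _
  rw [hsum, hprod] at h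
  have hP : (0:ℝ) ≤ ∏ i ∈ s, z i := Finset.prod_nonneg hz
  calc ∏ i ∈ s, z i = ((∏ i ∈ s, z i) ^ ((s.card:ℝ)⁻¹)) ^ (s.card:ℝ) := by
        rw [← Real.rpow_mul hP, inv_mul_cancel₀ hn.ne', Real.rpow_one]
    _ ≤ ((∑ i ∈ s, z i) / s.card) ^ (s.card:ℝ) :=
        Real.rpow_le_rpow (Real.rpow_nonneg hP _) h hn.le
    _ = ((∑ i ∈ s, z i) / s.card) ^ s.card := Real.rpow_natCast _ _


/-- Smallest eigenvalue of a real symmetric (Hermitian) matrix; junk value `0` otherwise. -/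
noncomputable def lamMin {d : ℕ} (M : Matrix (Fin d) (Fin d) ℝ) : ℝ :=
  if h : M.IsHermitian then ⨅ i, h.eigenvalues i else 0

theorem stmt15 {k : ℕ} (hk : 2 ≤ k) (τ : ℝ) (m : ℝ) (hm : 0 < m)
    (S : Matrix (Fin k) (Fin k) ℝ) (hS : S.PosDef)
    (hdet : (k : ℝ) * τ ≤ Real.log S.det) (htr : S.trace ≤ m) :
    Real.exp ((k : ℝ) * τ) * ((k : ℝ) - 1) ^ (k - 1) / m ^ (k - 1) ≤ lamMin S := by
  have h : S.IsHermitian := hS.isHermitian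
  set ev : Fin k → ℝ := h.eigenvalues with hev
  have hpos : ∀ i, 0 < ev i := hS.eigenvalues_pos
  -- minimizer
  haveI : NeZero k := ⟨by omega⟩
  have hne : (Finset.univ : Finset (Fin k)).Nonempty := Finset.univ_nonempty
  obtain ⟨i₀, -, hmin⟩ := Finset.exists_min_image Finset.univ ev hne
  -- trace and det facts
  have htrace : S.trace = ∑ i, ev i := by
    conv_lhs => rw [h.spectral_theorem]
    rw [Unitary.conjStarAlgAut_apply, Matrix.trace_mul_cycle]
    simp [Matrix.trace_diagonal, hev]
  have hdetprod : S.det = ∏ i, ev i := by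
    simpa using h.det_eq_prod_eigenvalues
  -- k - 1 facts
  have hk1 : (1:ℝ) ≤ (k:ℝ) - 1 := by
    have : (2:ℝ) ≤ (k:ℝ) := by exact_mod_cast hk
    linarith
  have hk1pos : (0:ℝ) < (k:ℝ) - 1 := by linarith
  have hcard : ((Finset.univ.erase i₀).card : ℝ) = (k:ℝ) - 1 := by
    rw [Finset.card_erase_of_mem (Finset.mem_univ i₀)]
    simp only [Finset.card_univ, Fintype.card_fin]
    rw [Nat.cast_sub (by omega)]
    norm_num
  have hcardn : (Finset.univ.erase i₀).card = k - 1 := by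
    rw [Finset.card_erase_of_mem (Finset.mem_univ i₀)]; simp
  -- sum over erase ≤ m
  have hsumerase : ∑ i ∈ Finset.univ.erase i₀, ev i ≤ m := by
    have := Finset.add_sum_erase Finset.univ ev (Finset.mem_univ i₀)
    have h1 : ∑ i ∈ Finset.univ.erase i₀, ev i = S.trace - ev i₀ := by
      rw [htrace, ← this]; ring
    rw [h1]
    have := hpos i₀
    linarith
  -- AM-GM
  have hAG : ∏ i ∈ Finset.univ.erase i₀, ev i ≤ (m / ((k:ℝ)-1)) ^ (k-1) := by
    calc ∏ i ∈ Finset.univ.erase i₀, ev i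
        ≤ ((∑ i ∈ Finset.univ.erase i₀, ev i) / (Finset.univ.erase i₀).card) ^
            (Finset.univ.erase i₀).card :=
          amgm _ _ (fun i _ => (hpos i).le)
      _ ≤ (m / ((k:ℝ)-1)) ^ (k-1) := by
          rw [hcard, hcardn]
          apply pow_le_pow_left₀
          · apply div_nonneg (Finset.sum_nonneg fun i _ => (hpos i).le) hk1pos.le
          · exact div_le_div_of_nonneg_right (c := (k:ℝ)-1) hsumerase hk1pos.le
  -- det lower bound
  have hdetge : Real.exp ((k:ℝ) * τ) ≤ S.det := by
    have h2 := Real.exp_le_exp.mpr hdet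
    rwa [Real.exp_log hS.det_pos] at h2
  have hsplit : S.det = ev i₀ * ∏ i ∈ Finset.univ.erase i₀, ev i := by
    rw [hdetprod, ← Finset.mul_prod_erase Finset.univ ev (Finset.mem_univ i₀)]
  have key : Real.exp ((k:ℝ) * τ) ≤ ev i₀ * (m / ((k:ℝ)-1)) ^ (k-1) := by
    calc Real.exp ((k:ℝ) * τ) ≤ S.det := hdetge
      _ = ev i₀ * ∏ i ∈ Finset.univ.erase i₀, ev i := hsplit
      _ ≤ ev i₀ * (m / ((k:ℝ)-1)) ^ (k-1) :=
          mul_le_mul_of_nonneg_left hAG (hpos i₀).le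
  have hbound : Real.exp ((k : ℝ) * τ) * ((k : ℝ) - 1) ^ (k - 1) / m ^ (k - 1) ≤ ev i₀ := by
    have hMpos : (0:ℝ) < m ^ (k-1) := by positivity
    have hcpos : (0:ℝ) < ((k:ℝ)-1) ^ (k-1) := by positivity
    rw [div_le_iff₀ hMpos]
    rw [div_pow] at key
    calc Real.exp ((k:ℝ)*τ) * ((k:ℝ)-1)^(k-1)
        ≤ (ev i₀ * (m^(k-1) / ((k:ℝ)-1)^(k-1))) * ((k:ℝ)-1)^(k-1) :=
          mul_le_mul_of_nonneg_right key hcpos.le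
      _ = ev i₀ * m^(k-1) := by field_simp
  rw [lamMin, dif_pos h]
  exact le_ciInf fun i => hbound.trans (hmin i (Finset.mem_univ i))
end

section
/- Let k ≥ 1, c > 0, r₀ ∈ (1, k], τ ∈ ℝ, and let Σ be a k×k real symmetric positive definite matrix with tr Σ = c, PR(Σ) ≥ r₀, and (1/k)·log det Σ ≥ τ. Then λ_max(Σ) ≤ c/√r₀ and λ_min(Σ) ≥ exp(k·τ)·(√r₀/c)^{k−1}. Consequently the condition number satisfies λ_max(Σ)/λ_min(Σ) ≤ exp(−k·τ)·(c/√r₀)^{k}. -/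
open Matrix

lemma trace_eq_and_trace_sq {k : ℕ} (S : Matrix (Fin k) (Fin k) ℝ) (h : S.IsHermitian) :
    S.trace = ∑ i, h.eigenvalues i ∧ (S * S).trace = ∑ i, (h.eigenvalues i)^2 := by
  set U : Matrix (Fin k) (Fin k) ℝ := (h.eigenvectorUnitary : Matrix (Fin k) (Fin k) ℝ)
  have hU : star U * U = 1 := (Matrix.mem_unitaryGroup_iff').mp (h.eigenvectorUnitary).2
  have hspec : S = U * diagonal (RCLike.ofReal ∘ h.eigenvalues) * star U := by
    have := h.spectral_theorem; rwa [Unitary.conjStarAlgAut_apply] at this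
  constructor
  · conv_lhs => rw [hspec]
    rw [trace_mul_cycle, hU, one_mul, trace_diagonal]
    simp [RCLike.ofReal]
  · conv_lhs => rw [hspec]
    rw [show (U * diagonal (RCLike.ofReal ∘ h.eigenvalues) * star U) *
        (U * diagonal (RCLike.ofReal ∘ h.eigenvalues) * star U)
      = U * (diagonal (RCLike.ofReal ∘ h.eigenvalues) * ((star U * U) *
        diagonal (RCLike.ofReal ∘ h.eigenvalues))) * star U by simp only [mul_assoc]]
    rw [hU, one_mul, trace_mul_cycle, hU, one_mul,
      diagonal_mul_diagonal, trace_diagonal]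
    simp [RCLike.ofReal, sq]

theorem stmt16 {k : ℕ} (hk : 1 ≤ k) (c : ℝ) (hc : 0 < c) (r₀ : ℝ)
    (hr₀ : 1 < r₀) (hr₀' : r₀ ≤ (k : ℝ)) (τ : ℝ)
    (S : Matrix (Fin k) (Fin k) ℝ) (hS : S.PosDef)
    (htr : S.trace = c)
    (hPR : r₀ ≤ S.trace ^ 2 / (S * S).trace)
    (hdet : τ ≤ (1 / (k : ℝ)) * Real.log S.det) :
    lamMax S ≤ c / Real.sqrt r₀ ∧
    Real.exp ((k : ℝ) * τ) * (Real.sqrt r₀ / c) ^ (k - 1) ≤ lamMin S ∧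
    lamMax S / lamMin S ≤ Real.exp (-((k : ℝ) * τ)) * (c / Real.sqrt r₀) ^ k := by
  haveI : Nonempty (Fin k) := Fin.pos_iff_nonempty.mp (by omega)
  have h : S.IsHermitian := hS.isHermitian
  have hev := trace_eq_and_trace_sq S h
  set lam := h.eigenvalues with hlam
  have hpos : ∀ i, 0 < lam i := hS.eigenvalues_pos
  have hk' : (0:ℝ) < (k:ℝ) := by positivity
  have hr₀pos : (0:ℝ) < r₀ := lt_trans one_pos hr₀
  have hsqrt : 0 < Real.sqrt r₀ := Real.sqrt_pos.mpr hr₀pos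
  set M := c / Real.sqrt r₀ with hMdef
  have hM : 0 < M := div_pos hc hsqrt
  -- trace identities
  have hsum : ∑ i, lam i = c := by rw [← hev.1, htr]
  have hQpos : 0 < (S * S).trace := by
    rw [hev.2]
    exact Finset.sum_pos (fun i _ => pow_pos (hpos i) 2) Finset.univ_nonempty
  have hQ : (S * S).trace ≤ c ^ 2 / r₀ := by
    rw [htr] at hPR
    rw [le_div_iff₀ hr₀pos]
    rw [le_div_iff₀ hQpos] at hPR
    linarith
  -- eigenvalue upper bound
  have hbound : ∀ i, lam i ≤ M := by
    intro i
    have h1 : lam i ^ 2 ≤ (S * S).trace := by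
      rw [hev.2]
      exact Finset.single_le_sum (fun j _ => sq_nonneg (lam j)) (Finset.mem_univ i)
    have h2 : lam i ^ 2 ≤ M ^ 2 := by
      have : M ^ 2 = c ^ 2 / r₀ := by
        rw [hMdef, div_pow, Real.sq_sqrt hr₀pos.le]
      rw [this]; linarith
    exact (pow_le_pow_iff_left₀ (hpos i).le hM.le two_ne_zero).mp h2
  -- lamMax / lamMin as sup/inf
  have hmaxeq : lamMax S = ⨆ i, lam i := by simp only [lamMax, dif_pos h, hlam]
  have hmineq : lamMin S = ⨅ i, lam i := by simp only [lamMin, dif_pos h, hlam]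
  obtain ⟨i₀, hi₀⟩ := Finite.exists_min lam
  have hminval : lamMin S = lam i₀ := by
    rw [hmineq]
    exact le_antisymm (ciInf_le (Finite.bddBelow_range _) i₀) (le_ciInf hi₀)
  have hmax_le : lamMax S ≤ M := by
    rw [hmaxeq]; exact ciSup_le hbound
  -- determinant bounds
  have hdetprod : S.det = ∏ i, lam i := by
    rw [h.det_eq_prod_eigenvalues]; simp [RCLike.ofReal]; rfl
  have hdetpos : 0 < S.det := hS.det_pos
  have hexp : Real.exp ((k:ℝ) * τ) ≤ S.det := by
    have h1 : (k:ℝ) * τ ≤ Real.log S.det := by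
      have := mul_le_mul_of_nonneg_left hdet hk'.le
      rwa [← mul_assoc, mul_one_div_cancel hk'.ne', one_mul] at this
    calc Real.exp ((k:ℝ) * τ) ≤ Real.exp (Real.log S.det) := Real.exp_le_exp.mpr h1
      _ = S.det := Real.exp_log hdetpos
  -- product over other eigenvalues
  have hprodbound : ∏ j ∈ Finset.univ.erase i₀, lam j ≤ M ^ (k - 1) := by
    have h1 : ∏ j ∈ Finset.univ.erase i₀, lam j ≤ ∏ _j ∈ Finset.univ.erase i₀, M :=
      Finset.prod_le_prod (fun j _ => (hpos j).le) (fun j _ => hbound j)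
    rwa [Finset.prod_const, Finset.card_erase_of_mem (Finset.mem_univ i₀),
      Finset.card_univ, Fintype.card_fin] at h1
  have hdetsplit : S.det = lam i₀ * ∏ j ∈ Finset.univ.erase i₀, lam j := by
    rw [hdetprod, ← Finset.mul_prod_erase Finset.univ lam (Finset.mem_univ i₀)]
  have hlower : Real.exp ((k:ℝ) * τ) * (Real.sqrt r₀ / c) ^ (k - 1) ≤ lamMin S := by
    rw [hminval]
    have hrc : Real.sqrt r₀ / c = M⁻¹ := by rw [hMdef, inv_div]
    rw [hrc, inv_pow, ← div_eq_mul_inv, div_le_iff₀ (by positivity)]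
    calc Real.exp ((k:ℝ) * τ) ≤ S.det := hexp
      _ = lam i₀ * ∏ j ∈ Finset.univ.erase i₀, lam j := hdetsplit
      _ ≤ lam i₀ * M ^ (k - 1) := by
          exact mul_le_mul_of_nonneg_left hprodbound (hpos i₀).le
  refine ⟨hmax_le, hlower, ?_⟩
  have hLpos : 0 < Real.exp ((k:ℝ) * τ) * (Real.sqrt r₀ / c) ^ (k - 1) := by positivity
  have hdd : lamMax S / lamMin S ≤
      M / (Real.exp ((k:ℝ) * τ) * (Real.sqrt r₀ / c) ^ (k - 1)) :=
    div_le_div₀ hM.le hmax_le hLpos hlower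
  refine hdd.trans (le_of_eq ?_)
  have hrc : Real.sqrt r₀ / c = M⁻¹ := by rw [hMdef, inv_div]
  rw [hrc, Real.exp_neg, inv_pow, div_eq_mul_inv, mul_inv, inv_inv]
  rw [show M * ((Real.exp ((k:ℝ) * τ))⁻¹ * M ^ (k-1))
      = (Real.exp ((k:ℝ) * τ))⁻¹ * (M ^ (k-1) * M) by ring]
  rw [← pow_succ, Nat.sub_add_cancel hk]
end

section
/- Let n ≥ 1 and let A be a 2n×2n real symplectic matrix (AᵀJA = J) with block decomposition A = [[a, b], [c, d]] into n×n blocks, and assume the block d is invertible. Define B := b·d⁻¹ and C := d⁻¹·c. Then B and C are symmetric, and A factors as A = [[I, B], [0, I]] · [[d⁻ᵀ, 0], [0, d]] · [[I, 0], [C, I]], i.e. as an upper unipotent shear (drift), a symplectic scaling, and a lower unipotent shear (kick). -/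
open Matrix

theorem stmt19 {n : ℕ} (hn : 1 ≤ n)
    (a b c d : Matrix (Fin n) (Fin n) ℝ)
    (hd : IsUnit d)
    (hA : (Matrix.fromBlocks a b c d)ᵀ * Jmat n * Matrix.fromBlocks a b c d = Jmat n) :
    (b * d⁻¹)ᵀ = b * d⁻¹ ∧
    (d⁻¹ * c)ᵀ = d⁻¹ * c ∧
    Matrix.fromBlocks a b c d
      = Matrix.fromBlocks 1 (b * d⁻¹) 0 1 *
        Matrix.fromBlocks (d⁻¹)ᵀ 0 0 d *
        Matrix.fromBlocks 1 0 (d⁻¹ * c) 1 := by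
  have hdet : IsUnit d.det := (Matrix.isUnit_iff_isUnit_det d).mp hd
  have hdi : d * d⁻¹ = 1 := Matrix.mul_nonsing_inv d hdet
  have hid : d⁻¹ * d = 1 := Matrix.nonsing_inv_mul d hdet
  -- relate Jmat to Mathlib's J
  have hJ : Jmat n = -(Matrix.J (Fin n) ℝ) := by
    simp [Jmat, Matrix.J, Matrix.fromBlocks_neg]
  set A := Matrix.fromBlocks a b c d with hAdef
  have hmem : A ∈ Matrix.symplecticGroup (Fin n) ℝ := by
    rw [SymplecticGroup.mem_iff']
    rw [hJ] at hA
    have := hA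
    simpa [Matrix.mul_neg, Matrix.neg_mul, neg_eq_iff_eq_neg] using this
  have hA' : A * Jmat n * Aᵀ = Jmat n := by
    have := (SymplecticGroup.mem_iff).mp hmem
    rw [hJ]
    simp [Matrix.mul_neg, Matrix.neg_mul, this]
  -- extract block equations
  rw [hAdef, Jmat, Matrix.fromBlocks_transpose, Matrix.fromBlocks_multiply,
    Matrix.fromBlocks_multiply] at hA hA'
  -- from hA: bottom-right : bᵀ d = dᵀ b
  have h1 : bᵀ * d = dᵀ * b := by
    have := congrArg Matrix.toBlocks₂₂ hA
    simp [Matrix.toBlocks_fromBlocks₂₂] at this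
    linear_combination (norm := noncomm_ring) this
  -- from hA': bottom-right : c dᵀ = d cᵀ
  have h2 : c * dᵀ = d * cᵀ := by
    have := congrArg Matrix.toBlocks₂₂ hA'
    simp [Matrix.toBlocks_fromBlocks₂₂] at this
    linear_combination (norm := noncomm_ring) this
  -- from hA': top-right : a dᵀ - b cᵀ = 1
  have h3 : a * dᵀ - b * cᵀ = 1 := by
    have := congrArg Matrix.toBlocks₁₂ hA'
    simp [Matrix.toBlocks_fromBlocks₁₂] at this
    linear_combination (norm := noncomm_ring) this
  have hdit : d⁻¹ᵀ * dᵀ = 1 := by rw [← Matrix.transpose_mul, hdi, Matrix.transpose_one]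
  have hdti : dᵀ * d⁻¹ᵀ = 1 := by rw [← Matrix.transpose_mul, hid, Matrix.transpose_one]
  have hB : (b * d⁻¹)ᵀ = b * d⁻¹ := by
    calc (b * d⁻¹)ᵀ = d⁻¹ᵀ * bᵀ := Matrix.transpose_mul _ _
    _ = d⁻¹ᵀ * (bᵀ * (d * d⁻¹)) := by rw [hdi, Matrix.mul_one]
    _ = d⁻¹ᵀ * (dᵀ * b) * d⁻¹ := by rw [← Matrix.mul_assoc bᵀ, h1]; noncomm_ring
    _ = (d⁻¹ᵀ * dᵀ) * (b * d⁻¹) := by noncomm_ring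
    _ = b * d⁻¹ := by rw [hdit, Matrix.one_mul]
  have hC : (d⁻¹ * c)ᵀ = d⁻¹ * c := by
    calc (d⁻¹ * c)ᵀ = cᵀ * d⁻¹ᵀ := Matrix.transpose_mul _ _
    _ = (d⁻¹ * d) * (cᵀ * d⁻¹ᵀ) := by rw [hid, Matrix.one_mul]
    _ = d⁻¹ * (d * cᵀ) * d⁻¹ᵀ := by noncomm_ring
    _ = d⁻¹ * (c * dᵀ) * d⁻¹ᵀ := by rw [h2]
    _ = (d⁻¹ * c) * (dᵀ * d⁻¹ᵀ) := by noncomm_ring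
    _ = d⁻¹ * c := by rw [hdti, Matrix.mul_one]
  refine ⟨hB, hC, ?_⟩
  have ha : a = d⁻¹ᵀ + b * (d⁻¹ * c) := by
    have : a = (1 + b * cᵀ) * d⁻¹ᵀ := by
      have : a * (dᵀ * d⁻¹ᵀ) = (1 + b * cᵀ) * d⁻¹ᵀ := by
        rw [← Matrix.mul_assoc]
        linear_combination (norm := noncomm_ring) h3 * d⁻¹ᵀ
      rwa [hdti, Matrix.mul_one] at this
    rw [this]
    have hcd : cᵀ * d⁻¹ᵀ = d⁻¹ * c := by
      rw [← Matrix.transpose_mul]; exact hC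
    calc (1 + b * cᵀ) * d⁻¹ᵀ = d⁻¹ᵀ + b * (cᵀ * d⁻¹ᵀ) := by noncomm_ring
    _ = d⁻¹ᵀ + b * (d⁻¹ * c) := by rw [hcd]
  rw [hAdef, Matrix.fromBlocks_multiply, Matrix.fromBlocks_multiply]
  have hb : b * d⁻¹ * d = b := by rw [Matrix.mul_assoc, hid, Matrix.mul_one]
  have hc : d * (d⁻¹ * c) = c := by rw [← Matrix.mul_assoc, hdi, Matrix.one_mul]
  simp only [Matrix.one_mul, Matrix.mul_one, Matrix.mul_zero, Matrix.zero_mul,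
    add_zero, zero_add, one_mul, mul_one, mul_zero, zero_mul, hb, hc]
  rw [← ha]
end
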